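/- Fix C > 0, ε ≥ 0, J ≥ 1. For each t = 1, …, J let v_t : ℝ → ℝ^D be differentiable at θ₀, and let u* : ℝ → ℝ^D be differentiable at θ₀ and such that for every θ in a neighborhood of θ₀, u*(θ) is the global minimizer over u ∈ ℝ^D of f(θ, u) = ½‖u‖² + (C/2) · Σ_{t=1}^J (max{|t − ⟨u, v_t(θ)⟩| − ε, 0})². Assume the nondegeneracy condition |⟨u*(θ₀), v_t(θ₀)⟩ − t| ≠ ε for every t, and let A = {t : |⟨u*(θ₀), v_t(θ₀)⟩ − t| > ε} and e_t = e_ε(⟨u*(θ₀), v_t(θ₀)⟩ − t). Then the derivative w = (du*/dθ)(θ₀) satisfies the linear equation (I + C Σ_{t ∈ A} v_t(θ₀) v_t(θ₀)ᵀ) · w = − C · Σ_{t ∈ A} ( e_t · v_t'(θ₀) + ⟨u*(θ₀), v_t'(θ₀)⟩ · v_t(θ₀) ); since the matrix I + C Σ_{t ∈ A} v_t(θ₀) v_t(θ₀)ᵀ is invertible, this equation determines (du*/dθ)(θ₀) uniquely. -/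

import Mathlib

open scoped RealInnerProductSpace


lemma rp_phi_hasDeriv (ε a x₀ : ℝ) (hε : 0 ≤ ε) (h : |x₀ - a| ≠ ε) :
    HasDerivAt (fun x => (max (|a - x| - ε) 0) ^ 2)
      (2 * (if ε ≤ x₀ - a then x₀ - a - ε else if x₀ - a ≤ -ε then x₀ - a + ε else 0)) x₀ := by
  rcases h.lt_or_gt with hlt | hgt
  · have h1 : ¬ (ε ≤ x₀ - a) := by
      have := le_abs_self (x₀ - a); push_neg; linarith
    have h2 : ¬ (x₀ - a ≤ -ε) := by
      have := neg_abs_le (x₀ - a); push_neg; linarith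
    rw [if_neg h1, if_neg h2, mul_zero]
    have hev : (fun x => (max (|a - x| - ε) 0) ^ 2) =ᶠ[nhds x₀] fun _ => (0:ℝ) := by
      have hc : ContinuousAt (fun x : ℝ => |x - a|) x₀ :=
        ((continuous_sub_right a).abs).continuousAt
      filter_upwards [hc.eventually_mem (Iio_mem_nhds hlt)] with x hx
      have hx' : |x - a| < ε := hx
      have : |a - x| - ε ≤ 0 := by rw [abs_sub_comm]; linarith
      simp [max_eq_right this]
    exact (hasDerivAt_const x₀ (0:ℝ)).congr_of_eventuallyEq hev
  · rcases lt_abs.mp hgt with hpos | hneg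
    · rw [if_pos hpos.le]
      have hev : (fun x => (max (|a - x| - ε) 0) ^ 2) =ᶠ[nhds x₀]
          fun x => (x - a - ε) ^ 2 := by
        have hc : ContinuousAt (fun x : ℝ => x - a) x₀ := (continuous_sub_right a).continuousAt
        filter_upwards [hc.eventually_mem (Ioi_mem_nhds hpos)] with x hx
        have hx' : ε < x - a := hx
        have h1 : |a - x| = x - a := by rw [abs_sub_comm]; exact abs_of_pos (by linarith)
        rw [h1, max_eq_left (by linarith)]
      have hd : HasDerivAt (fun x : ℝ => (x - a - ε) ^ 2) (2 * (x₀ - a - ε)) x₀ := by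
        have h1 : HasDerivAt (fun x : ℝ => x - a - ε) 1 x₀ :=
          ((hasDerivAt_id x₀).sub_const a).sub_const ε
        have := h1.pow 2
        refine this.congr_deriv ?_
        push_cast; ring
      exact hd.congr_of_eventuallyEq hev
    · have hneg' : x₀ - a < -ε := by linarith
      rw [if_neg (by push_neg; linarith), if_pos hneg'.le]
      have hev : (fun x => (max (|a - x| - ε) 0) ^ 2) =ᶠ[nhds x₀]
          fun x => (a - x - ε) ^ 2 := by
        have hc : ContinuousAt (fun x : ℝ => x - a) x₀ := (continuous_sub_right a).continuousAt
        filter_upwards [hc.eventually_mem (Iio_mem_nhds hneg')] with x hx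
        have hx' : x - a < -ε := hx
        have h1 : |a - x| = a - x := abs_of_pos (by linarith)
        rw [h1, max_eq_left (by linarith)]
      have hd : HasDerivAt (fun x : ℝ => (a - x - ε) ^ 2) (2 * (x₀ - a + ε)) x₀ := by
        have h1 : HasDerivAt (fun x : ℝ => a - x - ε) (-1) x₀ := by
          have := ((hasDerivAt_id x₀).const_sub a).sub_const ε
          simpa using this
        have := h1.pow 2
        refine this.congr_deriv ?_
        push_cast; ring
      exact hd.congr_of_eventuallyEq hev

open scoped RealInnerProductSpace

lemma rp_stat_aux {D J : ℕ} {C ε : ℝ}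
    (V : Fin J → EuclideanSpace ℝ (Fin D)) (u₀ : EuclideanSpace ℝ (Fin D))
    (c : Fin J → ℝ)
    (hc : ∀ t : Fin J, HasDerivAt (fun x => (max (|(((t : ℕ) : ℝ) + 1) - x| - ε) 0) ^ 2)
      (2 * c t) ⟪u₀, V t⟫)
    (hm : ∀ u : EuclideanSpace ℝ (Fin D),
      (1 / 2) * ‖u₀‖ ^ 2 +
          (C / 2) * ∑ t : Fin J, (max (|(((t : ℕ) : ℝ) + 1) - ⟪u₀, V t⟫| - ε) 0) ^ 2 ≤
        (1 / 2) * ‖u‖ ^ 2 +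
          (C / 2) * ∑ t : Fin J, (max (|(((t : ℕ) : ℝ) + 1) - ⟪u, V t⟫| - ε) 0) ^ 2) :
    u₀ + C • ∑ t : Fin J, c t • V t = 0 := by
  have key : ∀ h : EuclideanSpace ℝ (Fin D), ⟪u₀, h⟫ + (C / 2) * ∑ t : Fin J, 2 * c t * ⟪h, V t⟫ = 0 := by
    intro h
    have hf : HasDerivAt (fun r : ℝ => u₀ + r • h) h 0 := by
      simpa using (((hasDerivAt_id (0:ℝ)).smul_const h).const_add u₀)
    have h1 : HasDerivAt (fun r : ℝ => (1 / 2) * ‖u₀ + r • h‖ ^ 2) ⟪u₀, h⟫ 0 := by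
      have hi := (hf.inner ℝ hf).const_mul (1 / 2 : ℝ)
      have heq : (fun r : ℝ => (1 / 2) * ‖u₀ + r • h‖ ^ 2)
          = fun r : ℝ => (1 / 2) * ⟪u₀ + r • h, u₀ + r • h⟫ := by
        funext r; rw [real_inner_self_eq_norm_sq]
      rw [heq]
      refine hi.congr_deriv ?_
      rw [zero_smul, add_zero, real_inner_comm h u₀]
      ring
    have h3 : ∀ t : Fin J, HasDerivAt
        (fun r : ℝ => (max (|(((t : ℕ) : ℝ) + 1) - ⟪u₀ + r • h, V t⟫| - ε) 0) ^ 2)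
        (2 * c t * ⟪h, V t⟫) 0 := by
      intro t
      have h2 : HasDerivAt (fun r : ℝ => ⟪u₀ + r • h, V t⟫) ⟪h, V t⟫ 0 := by
        simpa using hf.inner ℝ (hasDerivAt_const (0:ℝ) (V t))
      have hpt : ⟪u₀ + (0:ℝ) • h, V t⟫ = ⟪u₀, V t⟫ := by rw [zero_smul, add_zero]
      have hc' : HasDerivAt (fun x => (max (|(((t : ℕ) : ℝ) + 1) - x| - ε) 0) ^ 2)
          (2 * c t) ((fun r : ℝ => ⟪u₀ + r • h, V t⟫) 0) := by
        show HasDerivAt _ _ (⟪u₀ + (0:ℝ) • h, V t⟫)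
        rw [hpt]; exact hc t
      exact hc'.comp 0 h2
    have h4 : HasDerivAt
        (fun r : ℝ => (C / 2) *
          ∑ t : Fin J, (max (|(((t : ℕ) : ℝ) + 1) - ⟪u₀ + r • h, V t⟫| - ε) 0) ^ 2)
        ((C / 2) * ∑ t : Fin J, 2 * c t * ⟪h, V t⟫) 0 :=
      (HasDerivAt.fun_sum (fun t _ => h3 t)).const_mul (C / 2)
    have h5 := h1.add h4
    have hmin : IsLocalMin (fun r : ℝ =>
        (1 / 2) * ‖u₀ + r • h‖ ^ 2 +
          (C / 2) * ∑ t : Fin J, (max (|(((t : ℕ) : ℝ) + 1) - ⟪u₀ + r • h, V t⟫| - ε) 0) ^ 2)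
        0 := by
      apply Filter.Eventually.of_forall
      intro r
      have h0 : u₀ + (0:ℝ) • h = u₀ := by rw [zero_smul, add_zero]
      show (1 / 2) * ‖u₀ + (0:ℝ) • h‖ ^ 2 + _ ≤ _
      rw [h0]
      exact hm (u₀ + r • h)
    exact hmin.hasDerivAt_eq_zero h5
  set g : EuclideanSpace ℝ (Fin D) := u₀ + C • ∑ t : Fin J, c t • V t with hg
  have e1 : ⟪g, g⟫ = ⟪u₀, g⟫ + C * ∑ t : Fin J, c t * ⟪V t, g⟫ := by
    rw [hg]
    nth_rewrite 1 [inner_add_left]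
    rw [real_inner_smul_left, sum_inner]
    congr 2
    exact Finset.sum_congr rfl fun t _ => by rw [real_inner_smul_left]
  have e2 := key g
  have e3 : (C / 2) * ∑ t : Fin J, 2 * c t * ⟪g, V t⟫ = C * ∑ t : Fin J, c t * ⟪V t, g⟫ := by
    rw [Finset.mul_sum, Finset.mul_sum]
    exact Finset.sum_congr rfl fun t _ => by rw [real_inner_comm]; ring
  rw [e3] at e2
  have : ⟪g, g⟫ = 0 := by rw [e1]; exact e2
  exact inner_self_eq_zero.mp this

/-- **Differentiating the rank pooling operator through its argmin.**
Let `u* θ` be the global minimizer of the parametric SVR objective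
`f(θ, u) = ½‖u‖² + (C/2) ∑ₜ (max (|t - ⟪u, v t θ⟫| - ε) 0)²` for `θ` near `θ₀`,
with `v t` and `u*` differentiable at `θ₀` and a nondegeneracy condition at `θ₀`.
Then `w = (du*/dθ)(θ₀)` satisfies
`(I + C ∑_{t∈A} v_t v_tᵀ) w = -C ∑_{t∈A} (e_t v_t' + ⟪u*, v_t'⟫ v_t)`
and since the matrix on the left is invertible this determines `w` uniquely. -/
theorem rankPool_argmin_deriv
    (D J : ℕ) (hJ : 1 ≤ J) (C ε : ℝ) (hC : 0 < C) (hε : 0 ≤ ε)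
    (v : Fin J → ℝ → EuclideanSpace ℝ (Fin D))
    (v' : Fin J → EuclideanSpace ℝ (Fin D))
    (θ₀ : ℝ)
    (hv : ∀ t : Fin J, HasDerivAt (v t) (v' t) θ₀)
    (ustar : ℝ → EuclideanSpace ℝ (Fin D))
    (hu : DifferentiableAt ℝ ustar θ₀)
    (hmin : ∀ᶠ θ in nhds θ₀, ∀ u : EuclideanSpace ℝ (Fin D),
      (1 / 2) * ‖ustar θ‖ ^ 2 +
          (C / 2) * ∑ t : Fin J, (max (|(((t : ℕ) : ℝ) + 1) - ⟪ustar θ, v t θ⟫| - ε) 0) ^ 2 ≤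
        (1 / 2) * ‖u‖ ^ 2 +
          (C / 2) * ∑ t : Fin J, (max (|(((t : ℕ) : ℝ) + 1) - ⟪u, v t θ⟫| - ε) 0) ^ 2)
    (hnd : ∀ t : Fin J, |⟪ustar θ₀, v t θ₀⟫ - (((t : ℕ) : ℝ) + 1)| ≠ ε)
    (eps : ℝ → ℝ)
    (heps : ∀ x : ℝ, eps x = if ε ≤ x then x - ε else if x ≤ -ε then x + ε else 0)
    (e : Fin J → ℝ)
    (he : ∀ t, e t = eps (⟪ustar θ₀, v t θ₀⟫ - (((t : ℕ) : ℝ) + 1)))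
    (A : Finset (Fin J))
    (hA : A = Finset.univ.filter
      (fun t : Fin J => ε < |⟪ustar θ₀, v t θ₀⟫ - (((t : ℕ) : ℝ) + 1)|)) :
    (deriv ustar θ₀ + C • ∑ t ∈ A, ⟪v t θ₀, deriv ustar θ₀⟫ • v t θ₀ =
        -(C • ∑ t ∈ A, (e t • v' t + ⟪ustar θ₀, v' t⟫ • v t θ₀))) ∧
    (∀ w : EuclideanSpace ℝ (Fin D),
      w + C • ∑ t ∈ A, ⟪v t θ₀, w⟫ • v t θ₀ =
          -(C • ∑ t ∈ A, (e t • v' t + ⟪ustar θ₀, v' t⟫ • v t θ₀)) →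
        w = deriv ustar θ₀) := by
  classical
  obtain ⟨sv, hsv⟩ : ∃ sv : Fin J → ℝ → ℝ,
      ∀ t θ, sv t θ = ⟪ustar θ, v t θ⟫ - (((t : ℕ) : ℝ) + 1) := ⟨_, fun _ _ => rfl⟩
  obtain ⟨δ, hδ⟩ : ∃ δ : Fin J → ℝ,
      ∀ t, δ t = if ε ≤ sv t θ₀ then ε else -ε := ⟨_, fun _ => rfl⟩
  have hw : HasDerivAt ustar (deriv ustar θ₀) θ₀ := hu.hasDerivAt
  set w := deriv ustar θ₀ with hwdef
  -- continuity of sv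
  have hcs : ∀ t : Fin J, ContinuousAt (sv t) θ₀ := by
    intro t
    have : ContinuousAt (fun θ => ⟪ustar θ, v t θ⟫ - (((t : ℕ) : ℝ) + 1)) θ₀ :=
      (hu.continuousAt.inner ((hv t).differentiableAt.continuousAt)).sub continuousAt_const
    simpa only [← hsv] using this
  -- membership in A
  have hmemA : ∀ t : Fin J, t ∈ A ↔ ε < |sv t θ₀| := by
    intro t
    rw [hA, Finset.mem_filter, hsv]
    simp
  have hnd' : ∀ t, |sv t θ₀| ≠ ε := by intro t; rw [hsv]; exact hnd t
  -- eventual branch stability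
  have hq : ∀ t : Fin J, ∀ᶠ θ in nhds θ₀,
      (ε < sv t θ ∧ ε < sv t θ₀) ∨ (sv t θ < -ε ∧ sv t θ₀ < -ε) ∨
        (|sv t θ| < ε ∧ |sv t θ₀| < ε) := by
    intro t
    rcases (hnd' t).lt_or_gt with hlt | hgt
    · exact ((hcs t).abs.eventually_mem (Iio_mem_nhds hlt)).mono
        fun θ hθ => Or.inr (Or.inr ⟨hθ, hlt⟩)
    · rcases lt_abs.mp hgt with hpos | hneg
      · exact ((hcs t).eventually_mem (Ioi_mem_nhds hpos)).mono
          fun θ hθ => Or.inl ⟨hθ, hpos⟩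
      · have hneg' : sv t θ₀ < -ε := by linarith
        exact ((hcs t).eventually_mem (Iio_mem_nhds hneg')).mono
          fun θ hθ => Or.inr (Or.inl ⟨hθ, hneg'⟩)
  -- eventual stationarity on A
  have hstat : ∀ᶠ θ in nhds θ₀,
      ustar θ + C • ∑ t ∈ A, (sv t θ - δ t) • v t θ = 0 := by
    filter_upwards [hmin, Filter.eventually_all.mpr hq] with θ hmθ hqθ
    obtain ⟨cθ, hcθ⟩ : ∃ c : Fin J → ℝ, ∀ t, c t =
        if ε ≤ sv t θ then sv t θ - ε else if sv t θ ≤ -ε then sv t θ + ε else 0 :=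
      ⟨_, fun _ => rfl⟩
    have hzero : ustar θ + C • ∑ t : Fin J, cθ t • v t θ = 0 := by
      apply rp_stat_aux (ε := ε) (fun t => v t θ) (ustar θ) cθ _ hmθ
      intro t
      have hne : |⟪ustar θ, v t θ⟫ - (((t : ℕ) : ℝ) + 1)| ≠ ε := by
        rw [← hsv]
        rcases hqθ t with ⟨h1, _⟩ | ⟨h1, _⟩ | ⟨h1, _⟩
        · exact (lt_of_lt_of_le h1 (le_abs_self _)).ne'
        · have : ε < |sv t θ| := lt_of_lt_of_le (by linarith) (neg_le_abs _)
          exact this.ne'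
        · exact h1.ne
      have hphi := rp_phi_hasDeriv ε (((t : ℕ) : ℝ) + 1) ⟪ustar θ, v t θ⟫ hε hne
      rw [hcθ t, hsv]
      exact hphi
    have hsum : ∑ t : Fin J, cθ t • v t θ = ∑ t ∈ A, (sv t θ - δ t) • v t θ := by
      have h1 : ∑ t : Fin J, cθ t • v t θ = ∑ t ∈ A, cθ t • v t θ := by
        refine (Finset.sum_subset (Finset.subset_univ A) fun t _ htA => ?_).symm
        have hA' : ¬ ε < |sv t θ₀| := fun hc' => htA ((hmemA t).mpr hc')
        rcases hqθ t with ⟨_, h2⟩ | ⟨_, h2⟩ | ⟨h2, _⟩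
        · exact absurd (lt_of_lt_of_le h2 (le_abs_self _)) hA'
        · exact absurd (lt_of_lt_of_le (by linarith) (neg_le_abs _)) hA'
        · have hc0 : cθ t = 0 := by
            rw [hcθ t, if_neg (by have := le_abs_self (sv t θ); push_neg; linarith),
              if_neg (by have := neg_le_abs (sv t θ); push_neg; linarith)]
          rw [hc0, zero_smul]
      rw [h1]
      refine Finset.sum_congr rfl fun t htA => ?_
      have hAt : ε < |sv t θ₀| := (hmemA t).mp htA
      rcases hqθ t with ⟨h1', h2'⟩ | ⟨h1', h2'⟩ | ⟨h1', h2'⟩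
      · rw [hcθ t, if_pos h1'.le, hδ t, if_pos h2'.le]
      · rw [hcθ t, if_neg (by push_neg; linarith), if_pos h1'.le, hδ t,
          if_neg (by push_neg; linarith), sub_neg_eq_add]
      · exact absurd hAt (by push_neg; exact h2'.le)
    rw [hsum] at hzero
    exact hzero
  -- derivative of each term
  have hterm : ∀ t ∈ A, HasDerivAt (fun θ => (sv t θ - δ t) • v t θ)
      ((sv t θ₀ - δ t) • v' t + (⟪ustar θ₀, v' t⟫ + ⟪w, v t θ₀⟫) • v t θ₀) θ₀ := by
    intro t _
    have h1 : HasDerivAt (fun θ => sv t θ - δ t) (⟪ustar θ₀, v' t⟫ + ⟪w, v t θ₀⟫) θ₀ := by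
      have h2 : HasDerivAt (fun θ => ⟪ustar θ, v t θ⟫ - (((t : ℕ) : ℝ) + 1) - δ t)
          (⟪ustar θ₀, v' t⟫ + ⟪w, v t θ₀⟫) θ₀ :=
        ((hw.inner ℝ (hv t)).sub_const (((t : ℕ) : ℝ) + 1)).sub_const (δ t)
      simpa only [← hsv] using h2
    exact h1.smul (hv t)
  have hH : HasDerivAt (fun θ => ustar θ + C • ∑ t ∈ A, (sv t θ - δ t) • v t θ)
      (w + C • ∑ t ∈ A, ((sv t θ₀ - δ t) • v' t +
        (⟪ustar θ₀, v' t⟫ + ⟪w, v t θ₀⟫) • v t θ₀)) θ₀ :=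
    hw.add ((HasDerivAt.fun_sum hterm).const_smul C)
  have hEq0 : (fun _ : ℝ => (0 : EuclideanSpace ℝ (Fin D))) =ᶠ[nhds θ₀]
      (fun θ => ustar θ + C • ∑ t ∈ A, (sv t θ - δ t) • v t θ) :=
    hstat.mono fun θ h => h.symm
  have hzero : w + C • ∑ t ∈ A, ((sv t θ₀ - δ t) • v' t +
      (⟪ustar θ₀, v' t⟫ + ⟪w, v t θ₀⟫) • v t θ₀) = 0 :=
    (hH.congr_of_eventuallyEq hEq0).unique (hasDerivAt_const θ₀ 0)
  -- e relation
  have heA : ∀ t ∈ A, sv t θ₀ - δ t = e t := by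
    intro t htA
    have hAt : ε < |sv t θ₀| := (hmemA t).mp htA
    rw [he t, ← hsv, heps]
    by_cases h1 : ε ≤ sv t θ₀
    · rw [if_pos h1, hδ t, if_pos h1]
    · have h2 : sv t θ₀ ≤ -ε := by
        push_neg at h1
        rcases lt_abs.mp hAt with h3 | h3
        · linarith
        · linarith
      rw [if_neg h1, if_pos h2, hδ t, if_neg h1, sub_neg_eq_add]
  -- split the sum
  have hsplit : ∑ t ∈ A, ((sv t θ₀ - δ t) • v' t +
      (⟪ustar θ₀, v' t⟫ + ⟪w, v t θ₀⟫) • v t θ₀) =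
      (∑ t ∈ A, (e t • v' t + ⟪ustar θ₀, v' t⟫ • v t θ₀)) +
        ∑ t ∈ A, ⟪v t θ₀, w⟫ • v t θ₀ := by
    rw [← Finset.sum_add_distrib]
    refine Finset.sum_congr rfl fun t htA => ?_
    rw [heA t htA, add_smul, real_inner_comm w (v t θ₀)]
    abel
  rw [hsplit, smul_add] at hzero
  have part1 : w + C • ∑ t ∈ A, ⟪v t θ₀, w⟫ • v t θ₀ =
      -(C • ∑ t ∈ A, (e t • v' t + ⟪ustar θ₀, v' t⟫ • v t θ₀)) := by
    rw [eq_neg_iff_add_eq_zero]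
    calc w + C • ∑ t ∈ A, ⟪v t θ₀, w⟫ • v t θ₀ +
        C • ∑ t ∈ A, (e t • v' t + ⟪ustar θ₀, v' t⟫ • v t θ₀)
        = w + (C • ∑ t ∈ A, (e t • v' t + ⟪ustar θ₀, v' t⟫ • v t θ₀) +
          C • ∑ t ∈ A, ⟪v t θ₀, w⟫ • v t θ₀) := by abel
      _ = 0 := hzero
  refine ⟨part1, fun w₁ h₁ => ?_⟩
  have hd : (w₁ - w) + C • ∑ t ∈ A, ⟪v t θ₀, w₁ - w⟫ • v t θ₀ = 0 := by
    have hsub := sub_eq_zero_of_eq (h₁.trans part1.symm)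
    have hsumd : ∑ t ∈ A, ⟪v t θ₀, w₁ - w⟫ • v t θ₀ =
        (∑ t ∈ A, ⟪v t θ₀, w₁⟫ • v t θ₀) - ∑ t ∈ A, ⟪v t θ₀, w⟫ • v t θ₀ := by
      rw [← Finset.sum_sub_distrib]
      exact Finset.sum_congr rfl fun t _ => by rw [inner_sub_right, sub_smul]
    rw [hsumd, smul_sub]
    calc w₁ - w + (C • ∑ t ∈ A, ⟪v t θ₀, w₁⟫ • v t θ₀ -
          C • ∑ t ∈ A, ⟪v t θ₀, w⟫ • v t θ₀)
        = (w₁ + C • ∑ t ∈ A, ⟪v t θ₀, w₁⟫ • v t θ₀) -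
          (w + C • ∑ t ∈ A, ⟪v t θ₀, w⟫ • v t θ₀) := by abel
      _ = 0 := hsub
  set d := w₁ - w with hddef
  have e1 : ⟪d, d + C • ∑ t ∈ A, ⟪v t θ₀, d⟫ • v t θ₀⟫ =
      ⟪d, d⟫ + C * ∑ t ∈ A, ⟪v t θ₀, d⟫ ^ 2 := by
    rw [inner_add_right, real_inner_smul_right, inner_sum]
    congr 2
    refine Finset.sum_congr rfl fun t _ => ?_
    rw [real_inner_smul_right, real_inner_comm d (v t θ₀)]
    ring
  have e2 : ⟪d, d⟫ + C * ∑ t ∈ A, ⟪v t θ₀, d⟫ ^ 2 = 0 := by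
    rw [← e1, hd, inner_zero_right]
  have h3 : (0:ℝ) ≤ ∑ t ∈ A, ⟪v t θ₀, d⟫ ^ 2 := Finset.sum_nonneg fun t _ => sq_nonneg _
  have h4 : ⟪d, d⟫ ≤ (0:ℝ) := by nlinarith [mul_nonneg hC.le h3]
  have h5 : d = 0 := inner_self_eq_zero.mp (le_antisymm h4 real_inner_self_nonneg)
  exact sub_eq_zero.mp h5
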